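/- Let K ⊂ ℝⁿ be a nonempty compact convex set and let f be a unit vector in ℝⁿ. Then for every ε > 0 there exists a closed halfspace P ⊂ ℝⁿ supporting K such that K ∩ P is a singleton and the inward unit normal g of P satisfies ‖f − g‖ ≤ ε. -/
import Mathlib


open scoped RealInnerProductSpace

/-- For any nonempty compact convex set `K ⊆ ℝⁿ`, any unit vector `f` and any `ε > 0`,
there is a closed halfspace `P = {y : α ≤ ⟪g, y⟫}` supporting `K` whose inward unit
normal `g` satisfies `‖f - g‖ ≤ ε` and such that `K ∩ P` is a singleton. -/
theorem exists_supporting_halfspace_singleton_inter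
    (n : ℕ) (K : Set (EuclideanSpace ℝ (Fin n)))
    (hne : K.Nonempty) (hc : IsCompact K) (hcv : Convex ℝ K)
    (f : EuclideanSpace ℝ (Fin n)) (hf : ‖f‖ = 1) (ε : ℝ) (hε : 0 < ε) :
    ∃ (g : EuclideanSpace ℝ (Fin n)) (α : ℝ), ‖g‖ = 1 ∧ ‖f - g‖ ≤ ε ∧
      (∀ y ∈ K, ⟪g, y⟫ ≤ α) ∧
      ∃ x : EuclideanSpace ℝ (Fin n), K ∩ {y | α ≤ ⟪g, y⟫} = {x} := by
  obtain ⟨c, hcK⟩ := hne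
  obtain ⟨D, hD⟩ := (Metric.isBounded_iff_subset_closedBall c).1 hc.isBounded
  have hDbound : ∀ y ∈ K, ‖y - c‖ ≤ D := by
    intro y hy
    have := hD hy
    rwa [Metric.mem_closedBall, dist_eq_norm] at this
  have hD0 : 0 ≤ D := by simpa using hDbound c hcK
  obtain ⟨R, hRgt, hRε⟩ : ∃ R : ℝ, D < R ∧ 2 * D ≤ ε * (R - D) := by
    refine ⟨D + (2 * D / ε + 1), ?_, ?_⟩
    · have : 0 < 2 * D / ε + 1 := by positivity
      linarith
    · have h1 : ε * (D + (2 * D / ε + 1) - D) = 2 * D + ε := by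
        field_simp; ring
      rw [h1]; linarith
  have hR0 : 0 < R := lt_of_le_of_lt hD0 hRgt
  set z : EuclideanSpace ℝ (Fin n) := c - R • f with hz
  obtain ⟨x, hxK, hmax⟩ := hc.exists_isMaxOn ⟨c, hcK⟩
    ((continuous_id.sub continuous_const).norm.continuousOn :
      ContinuousOn (fun y => ‖y - z‖) K)
  set v : EuclideanSpace ℝ (Fin n) := x - z with hv
  set r : ℝ := ‖v‖ with hr
  have hxz : v = (x - c) + R • f := by rw [hv, hz]; abel
  have hRf : ‖R • f‖ = R := by
    rw [norm_smul, hf, Real.norm_eq_abs, abs_of_pos hR0, mul_one]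
  have hrR : |r - R| ≤ D := by
    have h1 : |‖(x - c) + R • f‖ - ‖R • f‖| ≤ ‖x - c‖ := by
      have := abs_norm_sub_norm_le ((x - c) + R • f) (R • f)
      simpa using this
    rw [hRf] at h1
    calc |r - R| = |‖(x - c) + R • f‖ - R| := by rw [hr, hxz]
    _ ≤ ‖x - c‖ := h1
    _ ≤ D := hDbound x hxK
  have hrR' := abs_le.1 hrR
  have hrge : R - D ≤ r := by linarith [hrR'.1]
  have hrpos : 0 < r := by linarith
  set g : EuclideanSpace ℝ (Fin n) := r⁻¹ • v with hg
  have hgnorm : ‖g‖ = 1 := by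
    rw [hg, norm_smul, Real.norm_eq_abs, abs_of_pos (inv_pos.2 hrpos), ← hr,
      inv_mul_cancel₀ (ne_of_gt hrpos)]
  -- key inequality
  have key : ∀ y ∈ K, 2 * ⟪v, y - x⟫ ≤ -‖y - x‖ ^ 2 := by
    intro y hy
    have h1 : ‖y - z‖ ≤ r := hmax hy
    have h2 : ‖y - z‖ ^ 2 ≤ r ^ 2 := by
      have h0 : (0:ℝ) ≤ ‖y - z‖ := norm_nonneg _
      nlinarith
    have h3 : y - z = (y - x) + v := by rw [hv]; abel
    have h4 : ‖(y - x) + v‖ ^ 2 = ‖y - x‖ ^ 2 + 2 * ⟪y - x, v⟫ + ‖v‖ ^ 2 :=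
      norm_add_sq_real _ _
    rw [h3, h4, ← hr] at h2
    rw [real_inner_comm]
    linarith
  have hin : ∀ y : EuclideanSpace ℝ (Fin n),
      ⟪g, y⟫ - ⟪g, x⟫ = r⁻¹ * ⟪v, y - x⟫ := by
    intro y
    rw [hg, real_inner_smul_left, real_inner_smul_left, ← mul_sub,
      ← inner_sub_right]
  refine ⟨g, ⟪g, x⟫, hgnorm, ?_, ?_, x, ?_⟩
  · -- ‖f - g‖ ≤ ε
    have h5 : r • (f - g) = (r - R) • f - (x - c) := by
      rw [hg, smul_sub, smul_smul, mul_inv_cancel₀ (ne_of_gt hrpos), one_smul,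
        hxz, sub_smul]
      abel
    have hbound : ‖r • (f - g)‖ ≤ 2 * D := by
      rw [h5]
      calc ‖(r - R) • f - (x - c)‖ ≤ ‖(r - R) • f‖ + ‖x - c‖ := norm_sub_le _ _
      _ = |r - R| + ‖x - c‖ := by rw [norm_smul, hf, mul_one, Real.norm_eq_abs]
      _ ≤ D + D := add_le_add hrR (hDbound x hxK)
      _ = 2 * D := by ring
    have hbound' : r * ‖f - g‖ ≤ 2 * D := by
      rwa [norm_smul, Real.norm_eq_abs, abs_of_pos hrpos] at hbound
    have h2D : 2 * D ≤ ε * r := by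
      have := mul_le_mul_of_nonneg_left hrge (le_of_lt hε)
      linarith
    have hfin : r * ‖f - g‖ ≤ r * ε :=
      le_trans hbound' (le_trans h2D (le_of_eq (mul_comm ε r)))
    exact le_of_mul_le_mul_left hfin hrpos
  · -- support
    intro y hy
    have h := key y hy
    have h2 : ⟪v, y - x⟫ ≤ 0 := by nlinarith [sq_nonneg ‖y - x‖]
    have h3 : r⁻¹ * ⟪v, y - x⟫ ≤ 0 :=
      mul_nonpos_iff.2 (Or.inl ⟨le_of_lt (inv_pos.2 hrpos), h2⟩)
    linarith [hin y]
  · -- singleton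
    ext y
    simp only [Set.mem_inter_iff, Set.mem_setOf_eq, Set.mem_singleton_iff]
    constructor
    · rintro ⟨hyK, hyα⟩
      have h := key y hyK
      have h1 : 0 ≤ r⁻¹ * ⟪v, y - x⟫ := by linarith [hin y, hyα]
      have h2 : 0 ≤ ⟪v, y - x⟫ := by
        have h3 := mul_nonneg (le_of_lt hrpos) h1
        rwa [← mul_assoc, mul_inv_cancel₀ (ne_of_gt hrpos), one_mul] at h3
      have h3 : ‖y - x‖ ^ 2 = 0 := le_antisymm (by linarith) (sq_nonneg _)
      have h4 : ‖y - x‖ = 0 := by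
        exact pow_eq_zero_iff (two_ne_zero) |>.1 h3
      exact sub_eq_zero.1 (norm_eq_zero.1 h4)
    · rintro rfl
      exact ⟨hxK, le_refl _⟩
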